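/- Let R be a commutative ring, c,d ∈ ℤ, and let A be a ℤ-graded R-module with (c,d)-graded Frobenius data (μ,η,ν,ε) satisfying the signed relations (i)–(v). Define μ' := (−1)^{c(c+1)/2} μ and ν' := (−1)^{d(d+1)/2} ν. Then (A,μ',η,ν',ε) satisfies: graded associativity μ'∘(μ'⊗id)=(−1)^c μ'∘(id⊗μ'); the unitality relations μ'∘(η⊗id) = id_A = (−1)^c μ'∘(id⊗η); graded coassociativity (id⊗ν')∘ν'=(−1)^d (ν'⊗id)∘ν'; the counitality relations (id⊗ε)∘ν' = id_A = (−1)^d (ε⊗id)∘ν'; and the graded Frobenius relation (μ'⊗id)∘(id⊗ν')=(−1)^{cd} ν'∘μ'=(id⊗μ')∘(ν'⊗id). -/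

import Mathlib

/-! # A framework for ℤ-graded modules with Koszul sign conventions -/

noncomputable section
open scoped TensorProduct DirectSum

/-- The sign `(−1)^z` for an integer `z` (depends only on the parity of `z`),
as an element of the ring `R`. -/
def gsign (R : Type) [CommRing R] (z : ℤ) : R := (-1 : R) ^ z.natAbs

/-- A ℤ-graded `R`-module: a family of `R`-modules indexed by `ℤ`. -/
structure GradedModule (R : Type) [CommRing R] where
  piece : ℤ → Type
  [acg : ∀ i, AddCommGroup (piece i)]
  [mod : ∀ i, Module R (piece i)]

attribute [instance 2000] GradedModule.acg GradedModule.mod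

variable {R : Type} [CommRing R]

/-- Transport along an equality of degrees. -/
def GradedModule.pcast (A : GradedModule R) {i j : ℤ} (h : i = j) :
    A.piece i →ₗ[R] A.piece j where
  toFun a := h ▸ a
  map_add' a b := by subst h; rfl
  map_smul' r a := by subst h; rfl

/-- The tensor product of graded modules: `(A ⊗ B)_k = ⊕_{p+q=k} A_p ⊗ B_q`. -/
def GradedModule.tensor (A B : GradedModule R) : GradedModule R where
  piece k := ⨁ p : ℤ, (A.piece p ⊗[R] B.piece (k - p))

/-- The unit object: `R` concentrated in degree `0`. -/
def gUnit (R : Type) [CommRing R] : GradedModule R where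
  piece k := ↥(if k = 0 then (⊤ : Submodule R R) else ⊥)

/-- A graded map of degree `deg`: a family of `R`-linear maps `A_i → B_{i+deg}`. -/
structure GMap (A B : GradedModule R) where
  deg : ℤ
  app : ∀ i, A.piece i →ₗ[R] B.piece (i + deg)

namespace GMap

/-- The identity graded map (degree `0`). -/
protected def id (A : GradedModule R) : GMap A A :=
  ⟨0, fun i => A.pcast (by ring)⟩

/-- Composition of graded maps (maps act from the left; `g.comp f = g ∘ f`). -/
def comp {A B C : GradedModule R} (g : GMap B C) (f : GMap A B) : GMap A C :=
  ⟨f.deg + g.deg, fun i =>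
    (C.pcast (by ring)).comp ((g.app (i + f.deg)).comp (f.app i))⟩

/-- Scalar multiplication of a graded map. -/
instance {A B : GradedModule R} : SMul R (GMap A B) :=
  ⟨fun r f => ⟨f.deg, fun i => r • f.app i⟩⟩

/-- Re-present a graded map with an equal degree expression. -/
def reindex {A B : GradedModule R} (f : GMap A B) (n : ℤ) (h : f.deg = n) : GMap A B :=
  ⟨n, fun i => (B.pcast (by rw [h])).comp (f.app i)⟩

/-- The Koszul-signed tensor product of graded maps:
`(f ⊗ g)(a ⊗ b) = (−1)^{|g|·|a|} f(a) ⊗ g(b)`. -/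
def tmul {A A' B B' : GradedModule R} (f : GMap A A') (g : GMap B B') :
    GMap (A.tensor B) (A'.tensor B') :=
  ⟨f.deg + g.deg, fun k =>
    DirectSum.toModule R ℤ _ fun p =>
      (DirectSum.lof R ℤ
          (fun q => A'.piece q ⊗[R] B'.piece (k + (f.deg + g.deg) - q)) (p + f.deg)).comp
        (gsign R (g.deg * p) •
          (TensorProduct.map (f.app p)
            ((B'.pcast (show (k - p) + g.deg = k + (f.deg + g.deg) - (p + f.deg) by ring)).comp
              (g.app (k - p)))))⟩

end GMap

/-- The Koszul twist `τ : A ⊗ B → B ⊗ A`, `τ(a ⊗ b) = (−1)^{|a||b|} b ⊗ a`. -/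
def twistG (A B : GradedModule R) : GMap (A.tensor B) (B.tensor A) :=
  ⟨0, fun k =>
    DirectSum.toModule R ℤ _ fun p =>
      (DirectSum.lof R ℤ (fun q => B.piece q ⊗[R] A.piece (k + 0 - q)) (k - p)).comp
        (gsign R (p * (k - p)) •
          ((LinearMap.lTensor (B.piece (k - p)) (A.pcast (show p = k + 0 - (k - p) by ring))).comp
            (TensorProduct.comm R (A.piece p) (B.piece (k - p))).toLinearMap))⟩

/-- The associator `(A ⊗ B) ⊗ C → A ⊗ (B ⊗ C)` (no signs). -/
def assocG (A B C : GradedModule R) :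
    GMap ((A.tensor B).tensor C) (A.tensor (B.tensor C)) :=
  ⟨0, fun k =>
    DirectSum.toModule R ℤ _ fun p =>
      (DirectSum.toModule R ℤ _ fun q =>
        (DirectSum.lof R ℤ (fun q' => A.piece q' ⊗[R] (B.tensor C).piece (k + 0 - q')) q).comp
          ((LinearMap.lTensor (A.piece q)
            ((DirectSum.lof R ℤ (fun s => B.piece s ⊗[R] C.piece ((k + 0 - q) - s)) (p - q)).comp
              (LinearMap.lTensor (B.piece (p - q))
                (C.pcast (show k - p = (k + 0 - q) - (p - q) by ring))))).comp
            (TensorProduct.assoc R (A.piece q) (B.piece (p - q)) (C.piece (k - p))).toLinearMap)).comp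
        (TensorProduct.directSumLeft R R (fun q => A.piece q ⊗[R] B.piece (p - q))
          (C.piece (k - p))).toLinearMap⟩

/-- The inverse associator `A ⊗ (B ⊗ C) → (A ⊗ B) ⊗ C` (no signs). -/
def assocInvG (A B C : GradedModule R) :
    GMap (A.tensor (B.tensor C)) ((A.tensor B).tensor C) :=
  ⟨0, fun k =>
    DirectSum.toModule R ℤ _ fun p =>
      (DirectSum.toModule R ℤ _ fun s =>
        (DirectSum.lof R ℤ
            (fun q' => (A.tensor B).piece q' ⊗[R] C.piece (k + 0 - q')) (p + s)).comp
          ((TensorProduct.map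
              ((DirectSum.lof R ℤ (fun q => A.piece q ⊗[R] B.piece ((p + s) - q)) p).comp
                (LinearMap.lTensor (A.piece p) (B.pcast (show s = (p + s) - p by ring))))
              (C.pcast (show (k - p) - s = k + 0 - (p + s) by ring))).comp
            (TensorProduct.assoc R (A.piece p) (B.piece s)
              (C.piece ((k - p) - s))).symm.toLinearMap)).comp
        (TensorProduct.directSumRight R R (A.piece p)
          (fun s => B.piece s ⊗[R] C.piece ((k - p) - s))).toLinearMap⟩

/-- The left unitor `𝟙 ⊗ A → A`. -/
def lunitor (A : GradedModule R) : GMap ((gUnit R).tensor A) A :=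
  ⟨0, fun k =>
    DirectSum.toModule R ℤ _ fun p =>
      if h : p = 0 then
        TensorProduct.lift
          ((LinearMap.toSpanSingleton R (A.piece (k - p) →ₗ[R] A.piece (k + 0))
              (A.pcast (by omega))).comp
            (Submodule.subtype (if p = 0 then (⊤ : Submodule R R) else ⊥)))
      else 0⟩

/-- The right unitor `A ⊗ 𝟙 → A`. -/
def runitor (A : GradedModule R) : GMap (A.tensor (gUnit R)) A :=
  ⟨0, fun k =>
    DirectSum.toModule R ℤ _ fun p =>
      if h : k - p = 0 then
        TensorProduct.lift
          (((LinearMap.toSpanSingleton R (A.piece p →ₗ[R] A.piece (k + 0))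
              (A.pcast (by omega))).comp
            (Submodule.subtype (if k - p = 0 then (⊤ : Submodule R R) else ⊥))).flip)
      else 0⟩

/-- The inverse left unitor `A → 𝟙 ⊗ A`. -/
def lunitorInv (A : GradedModule R) : GMap A ((gUnit R).tensor A) :=
  ⟨0, fun k =>
    (DirectSum.lof R ℤ (fun p => (gUnit R).piece p ⊗[R] A.piece (k + 0 - p)) 0).comp
      (((TensorProduct.mk R ((gUnit R).piece 0) (A.piece (k + 0 - 0))) ⟨1, by simp⟩).comp
        (A.pcast (by ring)))⟩

/-- The inverse right unitor `A → A ⊗ 𝟙`. -/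
def runitorInv (A : GradedModule R) : GMap A (A.tensor (gUnit R)) :=
  ⟨0, fun k =>
    (DirectSum.lof R ℤ (fun p => A.piece p ⊗[R] (gUnit R).piece (k + 0 - p)) k).comp
      ((TensorProduct.mk R (A.piece k) ((gUnit R).piece (k + 0 - k))).flip
        ⟨1, by simp⟩)⟩


/-- The underlying element of `R` of an element of a piece of the unit object. -/
def unitVal {R : Type} [CommRing R] (k : ℤ) : (gUnit R).piece k →ₗ[R] R :=
  Submodule.subtype _
section FrobeniusRelations

variable {R : Type} [CommRing R]

/-- (i) graded associativity: `μ∘(μ⊗id) = (−1)^c μ∘(id⊗μ)` (under the associator). -/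
def relAssoc (c : ℤ) {A : GradedModule R} (μ : GMap (A.tensor A) A) : Prop :=
  μ.comp (μ.tmul (GMap.id A)) =
    gsign R c • ((μ.comp ((GMap.id A).tmul μ)).comp (assocG A A A))

/-- (ii) graded unitality: `(−1)^c μ∘(η⊗id) = (−1)^{c(c−1)/2} id = μ∘(id⊗η)`
(under the unitors). -/
def relUnit (c : ℤ) {A : GradedModule R} (μ : GMap (A.tensor A) A)
    (η : GMap (gUnit R) A) : Prop :=
  gsign R c • ((μ.comp (η.tmul (GMap.id A))).comp (lunitorInv A)) =
      gsign R (c * (c - 1) / 2) • GMap.id A ∧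
  (μ.comp ((GMap.id A).tmul η)).comp (runitorInv A) =
      gsign R (c * (c - 1) / 2) • GMap.id A

/-- (iii) graded coassociativity: `(id⊗ν)∘ν = (−1)^d (ν⊗id)∘ν` (under the associator). -/
def relCoassoc (d : ℤ) {A : GradedModule R} (ν : GMap A (A.tensor A)) : Prop :=
  ((GMap.id A).tmul ν).comp ν =
    gsign R d • ((assocG A A A).comp ((ν.tmul (GMap.id A)).comp ν))

/-- (iv) graded counitality: `(−1)^d (id⊗ε)∘ν = (−1)^{d(d−1)/2} id = (ε⊗id)∘ν`
(under the unitors). -/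
def relCounit (d : ℤ) {A : GradedModule R} (ν : GMap A (A.tensor A))
    (ε : GMap A (gUnit R)) : Prop :=
  gsign R d • ((runitor A).comp (((GMap.id A).tmul ε).comp ν)) =
      gsign R (d * (d - 1) / 2) • GMap.id A ∧
  (lunitor A).comp ((ε.tmul (GMap.id A)).comp ν) =
      gsign R (d * (d - 1) / 2) • GMap.id A

/-- (v) graded Frobenius relation:
`(μ⊗id)∘(id⊗ν) = (−1)^{cd} ν∘μ = (id⊗μ)∘(ν⊗id)` (under the associators). -/
def relFrob (c d : ℤ) {A : GradedModule R} (μ : GMap (A.tensor A) A)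
    (ν : GMap A (A.tensor A)) : Prop :=
  (μ.tmul (GMap.id A)).comp ((assocInvG A A A).comp ((GMap.id A).tmul ν)) =
      gsign R (c * d) • (ν.comp μ) ∧
  ((GMap.id A).tmul μ).comp ((assocG A A A).comp (ν.tmul (GMap.id A))) =
      gsign R (c * d) • (ν.comp μ)

/-- (vi) graded commutativity: `μ∘τ = (−1)^c μ`. -/
def relComm (c : ℤ) {A : GradedModule R} (μ : GMap (A.tensor A) A) : Prop :=
  μ.comp (twistG A A) = gsign R c • μ

/-- (vi') graded symmetry: `ε∘μ∘τ = (−1)^c ε∘μ`. -/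
def relSymm (c : ℤ) {A : GradedModule R} (μ : GMap (A.tensor A) A)
    (ε : GMap A (gUnit R)) : Prop :=
  (ε.comp μ).comp (twistG A A) = gsign R c • (ε.comp μ)

/-- Unsigned unitality `μ∘(η⊗id) = id = μ∘(id⊗η)` (under the unitors). -/
def relUnit₀ {A : GradedModule R} (μ : GMap (A.tensor A) A)
    (η : GMap (gUnit R) A) : Prop :=
  (μ.comp (η.tmul (GMap.id A))).comp (lunitorInv A) = GMap.id A ∧
  (μ.comp ((GMap.id A).tmul η)).comp (runitorInv A) = GMap.id A

/-- Unsigned counitality `(id⊗ε)∘ν = id = (ε⊗id)∘ν` (under the unitors). -/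
def relCounit₀ {A : GradedModule R} (ν : GMap A (A.tensor A))
    (ε : GMap A (gUnit R)) : Prop :=
  (runitor A).comp (((GMap.id A).tmul ε).comp ν) = GMap.id A ∧
  (lunitor A).comp ((ε.tmul (GMap.id A)).comp ν) = GMap.id A

/-- Unsigned Frobenius relation `(μ⊗id)∘(id⊗ν) = ν∘μ = (id⊗μ)∘(ν⊗id)`
(under the associators). -/
def relFrob₀ {A : GradedModule R} (μ : GMap (A.tensor A) A)
    (ν : GMap A (A.tensor A)) : Prop :=
  (μ.tmul (GMap.id A)).comp ((assocInvG A A A).comp ((GMap.id A).tmul ν)) = ν.comp μ ∧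
  ((GMap.id A).tmul μ).comp ((assocG A A A).comp (ν.tmul (GMap.id A))) = ν.comp μ

/-- The zig-zag (duality) identities for a pairing `p : A⊗A → 𝟙` and a
copairing `q : 𝟙 → A⊗A`:
`(p⊗id)∘(id⊗q) = id = (id⊗p)∘(q⊗id)` (under the associators and unitors). -/
def relZigZag {A : GradedModule R} (p : GMap (A.tensor A) (gUnit R))
    (q : GMap (gUnit R) (A.tensor A)) : Prop :=
  (lunitor A).comp ((p.tmul (GMap.id A)).comp ((assocInvG A A A).comp
      (((GMap.id A).tmul q).comp (runitorInv A)))) = GMap.id A ∧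
  (runitor A).comp (((GMap.id A).tmul p).comp ((assocG A A A).comp
      ((q.tmul (GMap.id A)).comp (lunitorInv A)))) = GMap.id A

end FrobeniusRelations
namespace GMap
variable {R : Type} [CommRing R] {A B C A' B' : GradedModule R}

@[simp] lemma smul_deg (r : R) (f : GMap A B) : (r • f).deg = f.deg := rfl
@[simp] lemma smul_app (r : R) (f : GMap A B) (i : ℤ) : (r • f).app i = r • f.app i := rfl

lemma smul_comp' (r : R) (g : GMap B C) (f : GMap A B) :
    (r • g).comp f = r • g.comp f := by
  show GMap.mk _ _ = GMap.mk _ _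
  congr 1
  funext i
  show (C.pcast _).comp ((r • g.app (i + f.deg)).comp (f.app i)) =
    r • ((C.pcast _).comp ((g.app (i + f.deg)).comp (f.app i)))
  ext x; simp

lemma comp_smul' (r : R) (g : GMap B C) (f : GMap A B) :
    g.comp (r • f) = r • g.comp f := by
  show GMap.mk _ _ = GMap.mk _ _
  congr 1
  funext i
  show (C.pcast _).comp ((g.app (i + f.deg)).comp (r • f.app i)) =
    r • ((C.pcast _).comp ((g.app (i + f.deg)).comp (f.app i)))
  ext x; simp

lemma smul_smul' (r s : R) (f : GMap A B) : r • (s • f) = (r * s) • f := by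
  show GMap.mk _ _ = GMap.mk _ _
  congr 1
  funext i
  exact smul_smul r s (f.app i)

lemma one_smul' (f : GMap A B) : (1 : R) • f = f := by
  cases f with
  | mk deg app =>
    show GMap.mk _ _ = GMap.mk _ _
    congr 1
    funext i
    exact one_smul R (app i)
end GMap
namespace GMap
variable {R : Type} [CommRing R] {A B A' B' : GradedModule R}

lemma smul_tmul' (r : R) (f : GMap A A') (g : GMap B B') :
    (r • f).tmul g = r • f.tmul g := by
  show GMap.mk _ _ = GMap.mk _ _
  congr 1
  funext k
  refine DirectSum.linearMap_ext _ fun p => ?_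
  refine LinearMap.ext fun x => ?_
  erw [LinearMap.comp_apply, LinearMap.comp_apply]
  change _ = r • DirectSum.toModule R ℤ ((A'.tensor B').piece (k + (f.deg + g.deg))) _
    (DirectSum.lof R ℤ (fun i => A.piece i ⊗[R] B.piece (k - i)) p x)
  erw [DirectSum.toModule_lof, DirectSum.toModule_lof]
  change DirectSum.lof R ℤ (fun q => A'.piece q ⊗[R] B'.piece (k + (f.deg + g.deg) - q)) (p + f.deg)
      ((gsign R (g.deg * p) • TensorProduct.map (r • f.app p) (B'.pcast _ ∘ₗ g.app (k - p))) x) =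
    r • DirectSum.lof R ℤ (fun q => A'.piece q ⊗[R] B'.piece (k + (f.deg + g.deg) - q)) (p + f.deg)
      ((gsign R (g.deg * p) • TensorProduct.map (f.app p) (B'.pcast _ ∘ₗ g.app (k - p))) x)
  rw [TensorProduct.map_smul_left, smul_comm, LinearMap.smul_apply, map_smul]
end GMap
namespace GMap
variable {R : Type} [CommRing R] {A B A' B' : GradedModule R}

lemma tmul_smul' (r : R) (f : GMap A A') (g : GMap B B') :
    f.tmul (r • g) = r • f.tmul g := by
  show GMap.mk _ _ = GMap.mk _ _
  congr 1
  funext k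
  refine DirectSum.linearMap_ext _ fun p => ?_
  refine LinearMap.ext fun x => ?_
  change (DirectSum.toModule (M := fun i => A.piece i ⊗[R] B.piece (k - i)) R ℤ
      ((A'.tensor B').piece (k + (f.deg + g.deg))) ((fun (q' : ℤ) => DirectSum.lof R ℤ (fun q => A'.piece q ⊗[R] B'.piece (k + (f.deg + g.deg) - q)) (q' + f.deg) ∘ₗ
      (gsign R (g.deg * q') • TensorProduct.map (f.app q') (B'.pcast
        (show (k - q') + g.deg = k + (f.deg + g.deg) - (q' + f.deg) by ring) ∘ₗ (r • g.app (k - q'))))) :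
        (q' : ℤ) → A.piece q' ⊗[R] B.piece (k - q') →ₗ[R] (A'.tensor B').piece (k + (f.deg + g.deg))))
      (DirectSum.lof R ℤ (fun i => A.piece i ⊗[R] B.piece (k - i)) p x) =
    r • (DirectSum.toModule (M := fun i => A.piece i ⊗[R] B.piece (k - i)) R ℤ
      ((A'.tensor B').piece (k + (f.deg + g.deg))) ((fun (q' : ℤ) => DirectSum.lof R ℤ (fun q => A'.piece q ⊗[R] B'.piece (k + (f.deg + g.deg) - q)) (q' + f.deg) ∘ₗ
      (gsign R (g.deg * q') • TensorProduct.map (f.app q') (B'.pcast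
        (show (k - q') + g.deg = k + (f.deg + g.deg) - (q' + f.deg) by ring) ∘ₗ g.app (k - q')))) :
        (q' : ℤ) → A.piece q' ⊗[R] B.piece (k - q') →ₗ[R] (A'.tensor B').piece (k + (f.deg + g.deg))))
      (DirectSum.lof R ℤ (fun i => A.piece i ⊗[R] B.piece (k - i)) p x)
  erw [DirectSum.toModule_lof, DirectSum.toModule_lof]
  change DirectSum.lof R ℤ (fun q => A'.piece q ⊗[R] B'.piece (k + (f.deg + g.deg) - q)) (p + f.deg)
      ((gsign R (g.deg * p) • TensorProduct.map (f.app p) (B'.pcast _ ∘ₗ (r • g.app (k - p)))) x) =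
    r • DirectSum.lof R ℤ (fun q => A'.piece q ⊗[R] B'.piece (k + (f.deg + g.deg) - q)) (p + f.deg)
      ((gsign R (g.deg * p) • TensorProduct.map (f.app p) (B'.pcast _ ∘ₗ g.app (k - p))) x)
  rw [LinearMap.comp_smul, TensorProduct.map_smul_right, smul_comm, LinearMap.smul_apply, map_smul]
end GMap
section Aux
variable {R : Type} [CommRing R]

lemma gsign_eq_ite (z : ℤ) : gsign R z = if Even z then 1 else (-1 : R) := by
  unfold gsign
  rcases Int.even_or_odd z with h | h
  · rw [if_pos h, Even.neg_one_pow (Int.natAbs_even.mpr h)]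
  · rw [if_neg (Int.not_even_iff_odd.mpr h), Odd.neg_one_pow (Int.natAbs_odd.mpr h)]

lemma gsign_mul (a b : ℤ) : gsign R a * gsign R b = gsign R (a + b) := by
  rw [gsign_eq_ite, gsign_eq_ite, gsign_eq_ite]
  by_cases ha : Even a <;> by_cases hb : Even b <;>
    simp [ha, hb, Int.even_add]

lemma gsign_even {z : ℤ} (h : Even z) : gsign R z = 1 := by
  rw [gsign_eq_ite, if_pos h]

lemma gsign_sq (z : ℤ) : gsign R z * gsign R z = 1 := by
  unfold gsign; rw [← pow_add]; exact Even.neg_one_pow ⟨_, rfl⟩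

lemma gsign_key (c : ℤ) :
    gsign R (c * (c + 1) / 2) * gsign R c * gsign R (c * (c - 1) / 2) = 1 := by
  obtain ⟨u, hu⟩ := Int.even_mul_succ_self c
  have h2 : Even (c * (c - 1)) := by
    have h := Int.even_mul_succ_self (c - 1)
    rwa [show (c - 1) * ((c - 1) + 1) = c * (c - 1) by ring] at h
  obtain ⟨v, hv⟩ := h2
  have e3 : c * (c + 1) = c * (c - 1) + 2 * c := by ring
  rw [gsign_mul, gsign_mul]
  apply gsign_even
  have e1 : c * (c + 1) / 2 = u := by omega
  have e2 : c * (c - 1) / 2 = v := by omega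
  rw [e1, e2]
  exact ⟨v + c, by omega⟩

end Aux

namespace GMap
variable {R : Type} [CommRing R]

lemma unscale {A B : GradedModule R} {a : R} (ha : a * a = 1) {f g : GMap A B}
    (h : a • f = g) : f = a • g := by
  rw [← h, GMap.smul_smul', ha, GMap.one_smul']

lemma smul_cancel {A B : GradedModule R} {a b : R} (f : GMap A B) (h : a = b) :
    a • f = b • f := by rw [h]

end GMap
/-- Rescaling `(c,d)`-graded Frobenius data by
`μ' := (−1)^{c(c+1)/2} μ` and `ν' := (−1)^{d(d+1)/2} ν` produces data satisfying the
alternative (Cieliebak–Oancea) sign conventions: graded associativity, the unitality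
relations `μ'∘(η⊗id) = id = (−1)^c μ'∘(id⊗η)`, graded coassociativity, the counitality
relations `(id⊗ε)∘ν' = id = (−1)^d (ε⊗id)∘ν'`, and the graded Frobenius relation. -/
theorem graded_frobenius_sign_change
    (R : Type) [CommRing R] (c d : ℤ) (A : GradedModule R)
    (μ : GMap (A.tensor A) A) (η : GMap (gUnit R) A)
    (ν : GMap A (A.tensor A)) (ε : GMap A (gUnit R))
    (hμ : μ.deg = c) (hη : η.deg = -c) (hν : ν.deg = d) (hε : ε.deg = -d)
    (h₁ : relAssoc c μ) (h₂ : relUnit c μ η) (h₃ : relCoassoc d ν)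
    (h₄ : relCounit d ν ε) (h₅ : relFrob c d μ ν) :
    relAssoc c (gsign R (c * (c + 1) / 2) • μ) ∧
    (((gsign R (c * (c + 1) / 2) • μ).comp (η.tmul (GMap.id A))).comp (lunitorInv A) =
        GMap.id A ∧
      gsign R c • (((gsign R (c * (c + 1) / 2) • μ).comp
          ((GMap.id A).tmul η)).comp (runitorInv A)) = GMap.id A) ∧
    relCoassoc d (gsign R (d * (d + 1) / 2) • ν) ∧
    ((runitor A).comp (((GMap.id A).tmul ε).comp (gsign R (d * (d + 1) / 2) • ν)) =
        GMap.id A ∧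
      gsign R d • ((lunitor A).comp
          ((ε.tmul (GMap.id A)).comp (gsign R (d * (d + 1) / 2) • ν))) = GMap.id A) ∧
    relFrob c d (gsign R (c * (c + 1) / 2) • μ) (gsign R (d * (d + 1) / 2) • ν) := by
  obtain ⟨h₂a, h₂b⟩ := h₂
  obtain ⟨h₄a, h₄b⟩ := h₄
  obtain ⟨h₅a, h₅b⟩ := h₅
  refine ⟨?_, ⟨?_, ?_⟩, ?_, ⟨?_, ?_⟩, ?_, ?_⟩
  · -- relAssoc
    unfold relAssoc
    simp only [GMap.smul_tmul', GMap.tmul_smul', GMap.comp_smul', GMap.smul_comp',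
      GMap.smul_smul']
    rw [h₁]
    simp only [GMap.smul_smul']
    exact GMap.smul_cancel _ (by ring)
  · -- unit left
    simp only [GMap.smul_comp']
    rw [GMap.unscale (gsign_sq c) h₂a]
    simp only [GMap.smul_smul']
    rw [show gsign R (c * (c + 1) / 2) * (gsign R c * gsign R (c * (c - 1) / 2)) = (1 : R) by
      linear_combination gsign_key (R := R) c]
    exact GMap.one_smul' _
  · -- unit right
    simp only [GMap.tmul_smul', GMap.comp_smul', GMap.smul_comp', GMap.smul_smul']
    rw [h₂b]
    simp only [GMap.smul_smul']
    rw [show gsign R c * gsign R (c * (c + 1) / 2) * gsign R (c * (c - 1) / 2) = (1 : R) by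
      linear_combination gsign_key (R := R) c]
    exact GMap.one_smul' _
  · -- relCoassoc
    unfold relCoassoc
    simp only [GMap.smul_tmul', GMap.tmul_smul', GMap.comp_smul', GMap.smul_comp',
      GMap.smul_smul']
    rw [h₃]
    simp only [GMap.smul_smul']
    exact GMap.smul_cancel _ (by ring)
  · -- counit left
    simp only [GMap.tmul_smul', GMap.comp_smul', GMap.smul_comp', GMap.smul_smul']
    rw [GMap.unscale (gsign_sq d) h₄a]
    simp only [GMap.smul_smul']
    rw [show gsign R (d * (d + 1) / 2) * (gsign R d * gsign R (d * (d - 1) / 2)) = (1 : R) by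
      linear_combination gsign_key (R := R) d]
    exact GMap.one_smul' _
  · -- counit right
    simp only [GMap.tmul_smul', GMap.smul_tmul', GMap.comp_smul', GMap.smul_comp',
      GMap.smul_smul']
    rw [h₄b]
    simp only [GMap.smul_smul']
    rw [show gsign R d * gsign R (d * (d + 1) / 2) * gsign R (d * (d - 1) / 2) = (1 : R) by
      linear_combination gsign_key (R := R) d]
    exact GMap.one_smul' _
  · -- Frobenius 1
    simp only [GMap.smul_tmul', GMap.tmul_smul', GMap.comp_smul', GMap.smul_comp',
      GMap.smul_smul']
    rw [h₅a]
    simp only [GMap.smul_smul']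
    exact GMap.smul_cancel _ (by ring)
  · -- Frobenius 2
    simp only [GMap.smul_tmul', GMap.tmul_smul', GMap.comp_smul', GMap.smul_comp',
      GMap.smul_smul']
    rw [h₅b]
    simp only [GMap.smul_smul']
    exact GMap.smul_cancel _ (by ring)
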